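/- Over ℚ, the Franel generating series satisfies (1-2x)·h(x) = ₂F₁(1/3, 2/3; 1; y) where y = 27x²/(1-2x)³; equivalently, Σ_{n≥0} F_n xⁿ = (1-2x)^{-1} Σ_{k≥0} ((1/3)_k (2/3)_k / (k!)²) (27x²/(1-2x)³)^k as formal power series in x. -/

import Mathlib

open Finset Nat


/-- Vandermonde as a `range` sum. -/
lemma vander (m n k : ℕ) :
    (m + n).choose k = ∑ i ∈ range (k + 1), m.choose i * n.choose (k - i) := by
  rw [Nat.add_choose_eq, Finset.Nat.sum_antidiagonal_eq_sum_range_succ_mk]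

/-- Subset-of-subset identity, unconditional in the ambient size. -/
lemma choose_mul' (b k i : ℕ) (h : i ≤ k) :
    b.choose k * k.choose i = b.choose i * (b - i).choose (k - i) := by
  rcases le_or_gt k b with hkb | hkb
  · exact Nat.choose_mul h
  · rw [Nat.choose_eq_zero_of_lt hkb, Nat.zero_mul]
    rcases le_or_gt i b with hib | hib
    · rw [Nat.choose_eq_zero_of_lt (by omega : b - i < k - i), Nat.mul_zero]
    · rw [Nat.choose_eq_zero_of_lt hib, Nat.zero_mul]

/-- `C(N,m)·C(N-m,k) = C(N,k)·C(N-k,m)`, unconditionally. -/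
lemma choose_sub_comm (N m k : ℕ) :
    N.choose m * (N - m).choose k = N.choose k * (N - k).choose m := by
  rcases le_or_gt (m + k) N with h | h
  · have e1 : N.choose (m + k) * (m + k).choose m = N.choose m * (N - m).choose k := by
      simpa using Nat.choose_mul (n := N) (Nat.le_add_right m k)
    have e2 : N.choose (k + m) * (k + m).choose k = N.choose k * (N - k).choose m := by
      simpa using Nat.choose_mul (n := N) (Nat.le_add_right k m)
    rw [← e1, ← e2, Nat.add_comm m k, Nat.choose_symm_add]
  · -- some choose is zero on both sides
    rcases le_or_gt m N with hm | hm
    · rcases le_or_gt k N with hk | hk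
      · rw [Nat.choose_eq_zero_of_lt (by omega : N - m < k),
          Nat.choose_eq_zero_of_lt (by omega : N - k < m), Nat.mul_zero, Nat.mul_zero]
      · rw [Nat.choose_eq_zero_of_lt hk, Nat.zero_mul,
          Nat.choose_eq_zero_of_lt (by omega : N - m < k), Nat.mul_zero]
    · rw [Nat.choose_eq_zero_of_lt hm, Nat.zero_mul,
        Nat.choose_eq_zero_of_lt (by omega : N - k < m), Nat.mul_zero]

/-- Vandermonde variant: `∑ i, C(a,i)·C(b,i) = C(a+b,a)`. -/
lemma vander_sq (a b : ℕ) :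
    ∑ i ∈ range (a + 1), a.choose i * b.choose i = (a + b).choose a := by
  rw [vander a b a]
  rw [← Finset.sum_range_reflect (fun j => a.choose j * b.choose (a - j)) (a + 1)]
  refine Finset.sum_congr rfl fun j hj => ?_
  have hja : j ≤ a := by simpa [Nat.lt_succ_iff] using hj
  have h1 : a + 1 - 1 - j = a - j := by omega
  have h2 : a - (a - j) = j := by omega
  rw [h1, h2, Nat.choose_symm hja]

/-- Inner sum for Surányi's identity. -/
lemma suranyi_inner (a b i : ℕ) (hia : i ≤ a) :
    ∑ k ∈ range (a + 1), a.choose k * b.choose k * k.choose i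
      = b.choose i * (a + (b - i)).choose (a - i) := by
  rcases lt_or_ge b i with hbi | hib
  · rw [Nat.choose_eq_zero_of_lt hbi, Nat.zero_mul]
    refine Finset.sum_eq_zero fun k _ => ?_
    rcases lt_or_ge k i with hk | hk
    · rw [Nat.choose_eq_zero_of_lt hk, Nat.mul_zero]
    · rw [Nat.choose_eq_zero_of_lt (by omega : b < k), Nat.mul_zero, Nat.zero_mul]
  · -- drop the `k < i` part
    rw [Finset.range_eq_Ico, ← Finset.sum_Ico_consecutive _ (Nat.zero_le i)
      (by omega : i ≤ a + 1)]
    have hz : ∑ k ∈ Finset.Ico 0 i, a.choose k * b.choose k * k.choose i = 0 := by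
      refine Finset.sum_eq_zero fun k hk => ?_
      have : k < i := (Finset.mem_Ico.mp hk).2
      rw [Nat.choose_eq_zero_of_lt this, Nat.mul_zero]
    rw [hz, Nat.zero_add, Finset.sum_Ico_eq_sum_range]
    have hstep : ∀ m, a.choose (i + m) * b.choose (i + m) * (i + m).choose i
        = b.choose i * (a.choose (i + m) * (b - i).choose m) := by
      intro m
      have := choose_mul' b (i + m) i (Nat.le_add_right i m)
      rw [Nat.add_sub_cancel_left] at this
      calc a.choose (i + m) * b.choose (i + m) * (i + m).choose i
          = a.choose (i + m) * (b.choose (i + m) * (i + m).choose i) := by ring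
        _ = a.choose (i + m) * (b.choose i * (b - i).choose m) := by rw [this]
        _ = b.choose i * (a.choose (i + m) * (b - i).choose m) := by ring
    have hrange : a + 1 - i = a - i + 1 := by omega
    rw [hrange]
    calc ∑ m ∈ range (a - i + 1), a.choose (i + m) * b.choose (i + m) * (i + m).choose i
        = ∑ m ∈ range (a - i + 1), b.choose i * (a.choose (i + m) * (b - i).choose m) := by
          exact Finset.sum_congr rfl fun m _ => hstep m
      _ = b.choose i * ∑ m ∈ range (a - i + 1), a.choose (i + m) * (b - i).choose m := by
          rw [Finset.mul_sum]
      _ = b.choose i * (a + (b - i)).choose (a - i) := by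
          congr 1
          rw [vander a (b - i) (a - i)]
          rw [← Finset.sum_range_reflect
            (fun m => a.choose (i + m) * (b - i).choose m) (a - i + 1)]
          refine Finset.sum_congr rfl fun j hj => ?_
          have hj' : j ≤ a - i := by simpa [Nat.lt_succ_iff] using hj
          have h1 : i + (a - i + 1 - 1 - j) = a - j := by omega
          have h2 : a - i + 1 - 1 - j = a - i - j := by omega
          rw [h1, h2, Nat.choose_symm (by omega : j ≤ a)]

/-- Surányi's identity. -/
lemma suranyi (a b : ℕ) :
    ∑ k ∈ range (a + 1), a.choose k * b.choose k * (a + b + k).choose k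
      = ((a + b).choose a) ^ 2 := by
  have step1 : ∀ k, k ∈ range (a + 1) →
      a.choose k * b.choose k * (a + b + k).choose k
        = ∑ i ∈ range (a + 1), (a + b).choose i * (a.choose k * b.choose k * k.choose i) := by
    intro k hk
    have hka : k ≤ a := by simpa [Nat.lt_succ_iff] using hk
    have hv : (a + b + k).choose k
        = ∑ i ∈ range (k + 1), (a + b).choose i * k.choose i := by
      rw [vander (a + b) k k]
      refine Finset.sum_congr rfl fun i hi => ?_
      rw [Nat.choose_symm (by simpa [Nat.lt_succ_iff] using hi)]
    have hext : ∑ i ∈ range (k + 1), (a + b).choose i * k.choose i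
        = ∑ i ∈ range (a + 1), (a + b).choose i * k.choose i := by
      refine Finset.sum_subset (by simp [Finset.range_subset_range]; omega) fun i _ hi => ?_
      have : k < i := by simp [Finset.mem_range, Nat.lt_succ_iff] at hi ⊢; omega
      rw [Nat.choose_eq_zero_of_lt this, Nat.mul_zero]
    rw [hv, hext, Finset.mul_sum]
    refine Finset.sum_congr rfl fun i _ => by ring
  rw [Finset.sum_congr rfl step1, Finset.sum_comm]
  have step2 : ∀ i, i ∈ range (a + 1) →
      ∑ k ∈ range (a + 1), (a + b).choose i * (a.choose k * b.choose k * k.choose i)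
        = (a + b).choose a * (a.choose i * b.choose i) := by
    intro i hi
    have hia : i ≤ a := by simpa [Nat.lt_succ_iff] using hi
    rw [← Finset.mul_sum, suranyi_inner a b i hia]
    rcases le_or_gt i b with hib | hbi
    · have key : (a + b).choose a * a.choose i
          = (a + b).choose i * (a + (b - i)).choose (a - i) := by
        have := Nat.choose_mul (n := a + b) hia
        have he : a + b - i = a + (b - i) := by omega
        rw [this, he]
      calc (a + b).choose i * (b.choose i * (a + (b - i)).choose (a - i))
          = (a + b).choose i * (a + (b - i)).choose (a - i) * b.choose i := by ring
        _ = (a + b).choose a * a.choose i * b.choose i := by rw [← key]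
        _ = (a + b).choose a * (a.choose i * b.choose i) := by ring
    · rw [Nat.choose_eq_zero_of_lt hbi]
      ring
  rw [Finset.sum_congr rfl step2, ← Finset.mul_sum, vander_sq, sq]

/-- Termwise conversion of the product of three binomials. -/
lemma term_conv (n k : ℕ) (hk : k ≤ n) :
    (n + k).choose k * (n.choose k * (n - k).choose k)
      = (2 * k).choose k * ((3 * k).choose (2 * k) * (n + k).choose (3 * k)) := by
  rcases le_or_gt (2 * k) n with h2 | h2
  · have e1 : (n + k).choose (2 * k) * (2 * k).choose k
        = (n + k).choose k * n.choose k := by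
      have := Nat.choose_mul (n := n + k) (show k ≤ 2 * k by omega)
      have h1 : n + k - k = n := by omega
      have h2 : 2 * k - k = k := by omega
      rw [this, h1, h2]
    have e2 : (n + k).choose (3 * k) * (3 * k).choose (2 * k)
        = (n + k).choose (2 * k) * (n - k).choose k := by
      have := Nat.choose_mul (n := n + k) (show 2 * k ≤ 3 * k by omega)
      have h1 : n + k - 2 * k = n - k := by omega
      have h2 : 3 * k - 2 * k = k := by omega
      rw [this, h1, h2]
    calc (n + k).choose k * (n.choose k * (n - k).choose k)
        = ((n + k).choose (2 * k) * (2 * k).choose k) * (n - k).choose k := by rw [e1]; ring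
      _ = (2 * k).choose k * ((n + k).choose (3 * k) * (3 * k).choose (2 * k)) := by
          rw [e2]; ring
      _ = (2 * k).choose k * ((3 * k).choose (2 * k) * (n + k).choose (3 * k)) := by ring
  · rw [Nat.choose_eq_zero_of_lt (show n - k < k by omega),
      Nat.choose_eq_zero_of_lt (show n + k < 3 * k by omega)]
    ring

/-- Sum of `C(N,m)·C(N-m,k)` over `m`. -/
lemma sum_choose_two (N k : ℕ) :
    ∑ m ∈ range (N + 1), N.choose m * (N - m).choose k
      = N.choose k * 2 ^ (N - k) := by
  have h1 : ∀ m, N.choose m * (N - m).choose k = N.choose k * (N - k).choose m :=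
    fun m => choose_sub_comm N m k
  rw [Finset.sum_congr rfl fun m _ => h1 m, ← Finset.mul_sum]
  congr 1
  rcases le_or_gt k N with hk | hk
  · rw [← Nat.sum_range_choose (N - k)]
    symm
    refine Finset.sum_subset (Finset.range_subset_range.mpr (by omega)) fun m _ hm => ?_
    exact Nat.choose_eq_zero_of_lt (by simp [Finset.mem_range, Nat.lt_succ_iff] at hm ⊢; omega)
  · have h0 : N - k = 0 := by omega
    rw [h0, pow_zero]
    rw [Finset.sum_eq_single_of_mem 0 (Finset.mem_range.mpr (by omega))]
    · rfl
    · intro m _ hm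
      cases m with
      | zero => exact absurd rfl hm
      | succ m => exact Nat.choose_zero_succ m

/-- Key natural-number identity for the Franel generating function. -/
lemma franel_key (n : ℕ) :
    ∑ j ∈ range (n + 1), (n.choose j) ^ 3
      = ∑ k ∈ range (n + 1),
          (2 * k).choose k * ((3 * k).choose (2 * k) * (n + k).choose (3 * k)) *
            2 ^ (n - 2 * k) := by
  have cube : ∀ j, j ∈ range (n + 1) → (n.choose j) ^ 3
      = ∑ k ∈ range (n + 1),
          (n + k).choose k * (n.choose j * (j.choose k * (n - j).choose k)) := by
    intro j hj
    have hjn : j ≤ n := by simpa [Nat.lt_succ_iff] using hj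
    have hsq : (n.choose j) ^ 2
        = ∑ k ∈ range (n + 1), j.choose k * (n - j).choose k * (n + k).choose k := by
      have hs := suranyi j (n - j)
      have hjnj : j + (n - j) = n := by omega
      rw [hjnj] at hs
      rw [← hs]
      refine Finset.sum_subset (Finset.range_subset_range.mpr (by omega)) fun k _ hk => ?_
      have : j < k := by simp [Finset.mem_range, Nat.lt_succ_iff] at hk ⊢; omega
      rw [Nat.choose_eq_zero_of_lt this, Nat.zero_mul, Nat.zero_mul]
    calc (n.choose j) ^ 3 = n.choose j * (n.choose j) ^ 2 := by ring
      _ = ∑ k ∈ range (n + 1),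
          n.choose j * (j.choose k * (n - j).choose k * (n + k).choose k) := by
            rw [hsq, Finset.mul_sum]
      _ = ∑ k ∈ range (n + 1),
          (n + k).choose k * (n.choose j * (j.choose k * (n - j).choose k)) := by
            exact Finset.sum_congr rfl fun k _ => by ring
  rw [Finset.sum_congr rfl cube, Finset.sum_comm]
  refine Finset.sum_congr rfl fun k hk => ?_
  have hkn : k ≤ n := by simpa [Nat.lt_succ_iff] using hk
  -- inner sum over j
  have inner : ∑ j ∈ range (n + 1), n.choose j * (j.choose k * (n - j).choose k)
      = n.choose k * ((n - k).choose k * 2 ^ (n - 2 * k)) := by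
    have drop : ∑ j ∈ range (n + 1), n.choose j * (j.choose k * (n - j).choose k)
        = ∑ m ∈ range (n - k + 1),
            n.choose (k + m) * ((k + m).choose k * (n - (k + m)).choose k) := by
      rw [Finset.range_eq_Ico, ← Finset.sum_Ico_consecutive _ (Nat.zero_le k)
        (by omega : k ≤ n + 1)]
      have hz : ∑ j ∈ Finset.Ico 0 k, n.choose j * (j.choose k * (n - j).choose k) = 0 := by
        refine Finset.sum_eq_zero fun j hjm => ?_
        have : j < k := (Finset.mem_Ico.mp hjm).2
        rw [Nat.choose_eq_zero_of_lt this, Nat.zero_mul, Nat.mul_zero]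
      rw [hz, Nat.zero_add, Finset.sum_Ico_eq_sum_range]
      have : n + 1 - k = n - k + 1 := by omega
      rw [this]
    rw [drop]
    have hterm : ∀ m, n.choose (k + m) * ((k + m).choose k * (n - (k + m)).choose k)
        = n.choose k * ((n - k).choose m * ((n - k) - m).choose k) := by
      intro m
      have h1 := choose_mul' n (k + m) k (Nat.le_add_right k m)
      rw [Nat.add_sub_cancel_left] at h1
      have h2 : n - (k + m) = (n - k) - m := by omega
      calc n.choose (k + m) * ((k + m).choose k * (n - (k + m)).choose k)
          = (n.choose (k + m) * (k + m).choose k) * (n - (k + m)).choose k := by ring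
        _ = (n.choose k * (n - k).choose m) * ((n - k) - m).choose k := by rw [h1, h2]
        _ = n.choose k * ((n - k).choose m * ((n - k) - m).choose k) := by ring
    rw [Finset.sum_congr rfl fun m _ => hterm m, ← Finset.mul_sum, sum_choose_two]
    have : n - k - k = n - 2 * k := by omega
    rw [this]
  rw [← Finset.mul_sum, inner, ← term_conv n k hkn]
  ring

lemma poch_prod (k : ℕ) :
    (∏ i ∈ range k, ((1 : ℚ) / 3 + i)) * (∏ i ∈ range k, ((2 : ℚ) / 3 + i))
      * 27 ^ k * (k.factorial : ℚ) = ((3 * k).factorial : ℚ) := by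
  induction k with
  | zero => simp
  | succ k ih =>
    rw [Finset.prod_range_succ, Finset.prod_range_succ]
    have h3 : 3 * (k + 1) = 3 * k + 1 + 1 + 1 := by omega
    rw [h3, Nat.factorial_succ, Nat.factorial_succ, Nat.factorial_succ, Nat.factorial_succ]
    push_cast
    linear_combination (((1:ℚ)/3 + k) * ((2:ℚ)/3 + k) * 27 * (k + 1)) * ih

lemma coeff_eq_choose (k : ℕ) :
    (∏ i ∈ range k, ((1 : ℚ) / 3 + i)) * (∏ i ∈ range k, ((2 : ℚ) / 3 + i))
      / (k.factorial : ℚ) ^ 2 * 27 ^ k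
      = (((2 * k).choose k : ℚ) * ((3 * k).choose (2 * k) : ℚ)) := by
  have h1 : ((3 * k).choose (2 * k) : ℚ) * (2 * k).factorial * k.factorial
      = ((3 * k).factorial : ℚ) := by
    have := Nat.choose_mul_factorial_mul_factorial (show 2 * k ≤ 3 * k by omega)
    have he : 3 * k - 2 * k = k := by omega
    rw [he] at this
    exact_mod_cast this
  have h2 : ((2 * k).choose k : ℚ) * k.factorial * k.factorial
      = ((2 * k).factorial : ℚ) := by
    have := Nat.choose_mul_factorial_mul_factorial (show k ≤ 2 * k by omega)
    have he : 2 * k - k = k := by omega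
    rw [he] at this
    exact_mod_cast this
  have hk : (k.factorial : ℚ) ≠ 0 := by exact_mod_cast Nat.factorial_ne_zero k
  have hp := poch_prod k
  rw [div_mul_eq_mul_div, div_eq_iff (pow_ne_zero 2 hk)]
  apply mul_right_cancel₀ hk
  linear_combination hp - h1 - (((3 * k).choose (2 * k) : ℚ) * (k.factorial : ℚ)) * h2

open Finset Nat PowerSeries

noncomputable def geomA (d : ℕ) : PowerSeries ℚ :=
  PowerSeries.mk fun m => (2 : ℚ) ^ m * ((m + d).choose d)

lemma coeff_one_sub_two_X_mul (f : PowerSeries ℚ) (n : ℕ) :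
    (coeff n) ((1 - 2 * X) * f) = coeff n f - 2 * coeff n (X * f) := by
  have expand : (1 - 2 * X) * f = f - C 2 * (X * f) := by
    rw [map_ofNat C 2]; ring
  rw [expand, map_sub, coeff_C_mul]

lemma geomA_mul (d : ℕ) : (1 - 2 * X) * geomA (d + 1) = geomA d := by
  ext n
  rw [coeff_one_sub_two_X_mul]
  cases n with
  | zero => simp [geomA]
  | succ n =>
    rw [coeff_succ_X_mul]
    simp only [geomA, coeff_mk]
    have h1 : n + 1 + (d + 1) = (n + 1 + d) + 1 := by omega
    have h2 : n + (d + 1) = n + 1 + d := by omega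
    rw [h1, h2, Nat.choose_succ_succ (n + 1 + d) d]
    push_cast
    ring

lemma geomA_zero_mul : (1 - 2 * X) * geomA 0 = 1 := by
  ext n
  rw [coeff_one_sub_two_X_mul, coeff_one]
  cases n with
  | zero => simp [geomA]
  | succ n =>
    rw [coeff_succ_X_mul]
    simp [geomA, pow_succ]
    ring

lemma const_one_sub_two_X : constantCoeff (1 - 2 * X : PowerSeries ℚ) ≠ 0 := by
  simp

lemma inv_one_sub_two_X : (1 - 2 * X : PowerSeries ℚ)⁻¹ = geomA 0 := by
  rw [PowerSeries.inv_eq_iff_mul_eq_one const_one_sub_two_X]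
  rw [mul_comm]; exact geomA_zero_mul

lemma inv_one_sub_two_X_pow (d : ℕ) :
    ((1 - 2 * X : PowerSeries ℚ)⁻¹) ^ (d + 1) = geomA d := by
  induction d with
  | zero => rw [pow_one, inv_one_sub_two_X]
  | succ d ih =>
    have hmul : (1 - 2 * X : PowerSeries ℚ) * (1 - 2 * X : PowerSeries ℚ)⁻¹ = 1 :=
      PowerSeries.mul_inv_cancel _ const_one_sub_two_X
    calc ((1 - 2 * X : PowerSeries ℚ)⁻¹) ^ (d + 2)
        = ((1 - 2 * X : PowerSeries ℚ)⁻¹) ^ (d + 1) * (1 - 2 * X)⁻¹ := by ring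
      _ = geomA d * (1 - 2 * X)⁻¹ := by rw [ih]
      _ = ((1 - 2 * X) * geomA (d + 1)) * (1 - 2 * X)⁻¹ := by rw [geomA_mul]
      _ = geomA (d + 1) * ((1 - 2 * X) * (1 - 2 * X)⁻¹) := by ring
      _ = geomA (d + 1) := by rw [hmul, mul_one]

open PowerSeries in
/-- The Franel generating series equals `(1-2x)⁻¹ · ₂F₁(1/3,2/3;1; 27x²/(1-2x)³)`.
Since `y = 27x²/(1-2x)³` has order `2k` at the `k`-th power, the `n`-th coefficient of the
hypergeometric sum only involves terms with `k ≤ n`, so the identity is stated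
coefficient-wise with the sum truncated at `k = n`. -/
theorem franel_series_hypergeometric :
    let h : PowerSeries ℚ :=
      PowerSeries.mk fun n => ∑ k ∈ Finset.range (n + 1), ((n.choose k : ℚ)) ^ 3
    let y : PowerSeries ℚ := 27 * X ^ 2 * ((1 - 2 * X)⁻¹) ^ 3
    ∀ n : ℕ,
      PowerSeries.coeff (R := ℚ) n h =
        PowerSeries.coeff (R := ℚ) n
          ((1 - 2 * X)⁻¹ *
            ∑ k ∈ Finset.range (n + 1),
              PowerSeries.C (R := ℚ)
                  ((∏ i ∈ Finset.range k, ((1 : ℚ) / 3 + i)) *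
                    (∏ i ∈ Finset.range k, ((2 : ℚ) / 3 + i)) / (k.factorial : ℚ) ^ 2) *
                y ^ k) := by
  intro h y n
  have hL : PowerSeries.coeff n h = ∑ j ∈ range (n + 1), ((n.choose j : ℚ)) ^ 3 := by
    simp only [h, coeff_mk]
  rw [hL, Finset.mul_sum, map_sum]
  have hterm : ∀ k ∈ range (n + 1),
      PowerSeries.coeff n ((1 - 2 * X)⁻¹ *
          (PowerSeries.C
              ((∏ i ∈ Finset.range k, ((1 : ℚ) / 3 + i)) *
                (∏ i ∈ Finset.range k, ((2 : ℚ) / 3 + i)) / (k.factorial : ℚ) ^ 2) *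
            y ^ k))
        = (((2 * k).choose k * ((3 * k).choose (2 * k) * (n + k).choose (3 * k)) *
            2 ^ (n - 2 * k) : ℕ) : ℚ) := by
    intro k hk
    set c : ℚ := (∏ i ∈ Finset.range k, ((1 : ℚ) / 3 + i)) *
        (∏ i ∈ Finset.range k, ((2 : ℚ) / 3 + i)) / (k.factorial : ℚ) ^ 2 with hc
    have hy : (1 - 2 * X)⁻¹ * (PowerSeries.C c * y ^ k)
        = PowerSeries.C (c * 27 ^ k) * (X ^ (2 * k) * geomA (3 * k)) := by
      have h27 : (27 : ℚ⟦X⟧) ^ k = PowerSeries.C (27 ^ k) := by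
        rw [map_pow, map_ofNat]
      calc (1 - 2 * X)⁻¹ * (PowerSeries.C c * y ^ k)
          = PowerSeries.C c * (27 : ℚ⟦X⟧) ^ k *
              (X ^ (2 * k) * ((1 - 2 * X)⁻¹) ^ (3 * k + 1)) := by
            simp only [y]; ring
        _ = PowerSeries.C (c * 27 ^ k) * (X ^ (2 * k) * geomA (3 * k)) := by
            rw [h27, ← map_mul, inv_one_sub_two_X_pow]
    rw [hy, coeff_C_mul, PowerSeries.coeff_X_pow_mul']
    have hq : c * 27 ^ k = (((2 * k).choose k : ℚ) * ((3 * k).choose (2 * k) : ℚ)) := by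
      rw [hc]; exact coeff_eq_choose k
    rcases le_or_gt (2 * k) n with h2 | h2
    · rw [if_pos h2]
      simp only [geomA, coeff_mk]
      have he : n - 2 * k + 3 * k = n + k := by omega
      rw [he, hq]
      push_cast
      ring
    · rw [if_neg (by omega)]
      have : (n + k).choose (3 * k) = 0 := Nat.choose_eq_zero_of_lt (by omega)
      rw [this]
      push_cast
      ring
  rw [Finset.sum_congr rfl hterm]
  rw [← Nat.cast_sum]
  rw [← franel_key n]
  push_cast
  rfl
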